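/- Let P ⊆ ℝⁿ be a polytope and let v, w ∈ ℝⁿ belong to the same chamber of the fundamental hyperplane arrangement H_P. Then (P,v) and (P,w) are positively oriented and they define the same bot-top diagonal: Δ_{(P,v)} = Δ_{(P,w)}, i.e. for every z ∈ P one has bot_v(P∩ρ_zP) = bot_w(P∩ρ_zP) and top_v(P∩ρ_zP) = top_w(P∩ρ_zP). -/

import Mathlib

open scoped BigOperators

noncomputable section

/-- Vectors in `ℝⁿ`. -/
abbrev Vec (n : ℕ) := Fin n → ℝ

/-- The standard scalar product on `ℝⁿ`. -/
def dot {n : ℕ} (x y : Vec n) : ℝ := ∑ i, x i * y i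

/-- A polytope is the convex hull of a finite set of points. -/
def IsPolytope {n : ℕ} (P : Set (Vec n)) : Prop :=
  ∃ S : Finset (Vec n), P = convexHull ℝ (S : Set (Vec n))

/-- A face of `P`: either `P` itself (take `c = 0`) or the subset of `P` where some linear
functional attains its maximum over `P`. -/
def IsFace {n : ℕ} (P F : Set (Vec n)) : Prop :=
  ∃ c : Vec n, F = {x ∈ P | ∀ y ∈ P, dot c y ≤ dot c x}

/-- Dimension of a subset of `ℝⁿ`: the rank of the direction of its affine span. -/
noncomputable def sdim {n : ℕ} (A : Set (Vec n)) : ℕ :=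
  Module.finrank ℝ (affineSpan ℝ A).direction

/-- The normal cone of a face `F` of `P`. -/
def normalCone {n : ℕ} (P F : Set (Vec n)) : Set (Vec n) :=
  {c | F ⊆ {x ∈ P | ∀ y ∈ P, dot c y ≤ dot c x}}

/-- `coneOf X`: nonnegative linear combinations of finitely many elements of `X`. -/
def coneOf {n : ℕ} (X : Set (Vec n)) : Set (Vec n) :=
  {v | ∃ (k : ℕ) (x : Fin k → Vec n) (l : Fin k → ℝ),
      (∀ i, x i ∈ X) ∧ (∀ i, 0 ≤ l i) ∧ v = ∑ i, l i • x i}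

/-- The reflection `ρ_z P = 2z - P` of `P` with respect to `z`. -/
def reflP {n : ℕ} (z : Vec n) (P : Set (Vec n)) : Set (Vec n) :=
  (fun x => (2 : ℝ) • z - x) '' P

/-- An edge is a 1-dimensional face. -/
def IsEdge {n : ℕ} (P E : Set (Vec n)) : Prop := IsFace P E ∧ sdim E = 1

/-- `(P, v)` is oriented if `v` is not perpendicular to any edge of `P`. -/
def Oriented {n : ℕ} (P : Set (Vec n)) (v : Vec n) : Prop :=
  ∀ E, IsEdge P E → ∀ d ∈ (affineSpan ℝ E).direction, d ≠ 0 → dot d v ≠ 0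

/-- `(P, v)` is positively oriented if `(P ∩ ρ_z P, v)` is oriented for every `z ∈ P`. -/
def PosOriented {n : ℕ} (P : Set (Vec n)) (v : Vec n) : Prop :=
  ∀ z ∈ P, Oriented (P ∩ reflP z P) v

/-- `x` is the minimizer of `⟨-, v⟩` on `P`. -/
def IsBotOf {n : ℕ} (P : Set (Vec n)) (v x : Vec n) : Prop :=
  x ∈ P ∧ ∀ y ∈ P, dot v x ≤ dot v y

/-- `x` is the maximizer of `⟨-, v⟩` on `P`. -/
def IsTopOf {n : ℕ} (P : Set (Vec n)) (v x : Vec n) : Prop :=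
  x ∈ P ∧ ∀ y ∈ P, dot v y ≤ dot v x

/-- `(P, v)` is quasi-oriented if `⟨-, v⟩` has a unique minimizer and a unique maximizer on `P`. -/
def QuasiOriented {n : ℕ} (P : Set (Vec n)) (v : Vec n) : Prop :=
  (∃! x, IsBotOf P v x) ∧ (∃! x, IsTopOf P v x)

/-- `(P, v)` is quasi-positively oriented if `(P ∩ ρ_z P, v)` is quasi-oriented for all `z ∈ P`. -/
def QuasiPosOriented {n : ℕ} (P : Set (Vec n)) (v : Vec n) : Prop :=
  ∀ z ∈ P, QuasiOriented (P ∩ reflP z P) v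

/-- The polytope `P^φ = π^φ(P × P) ⊆ ℝ^{n+1}`, where `π^φ(x,y) = ((x+y)/2, ⟨x - y, v⟩)`. -/
def Pphi {n : ℕ} (P : Set (Vec n)) (v : Vec n) : Set (Vec (n + 1)) :=
  {w | ∃ x ∈ P, ∃ y ∈ P, w = Fin.snoc ((1 / 2 : ℝ) • (x + y)) (dot (x - y) v)}

/-- The pair of faces `(F, G)` belongs to `F^φ`: there are no `x ∈ F`, `y ∈ G`, `λ > 0` with
`(π(x,y), φ(x,y) - λ) ∈ P^φ`. -/
def InFphi {n : ℕ} (P : Set (Vec n)) (v : Vec n) (F G : Set (Vec n)) : Prop :=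
  ¬ ∃ x ∈ F, ∃ y ∈ G, ∃ lam : ℝ, 0 < lam ∧
      (Fin.snoc ((1 / 2 : ℝ) • (x + y)) (dot (x - y) v - lam) : Vec (n + 1)) ∈ Pphi P v

/-- The set `(A + B)/2`. -/
def avgSet {n : ℕ} (A B : Set (Vec n)) : Set (Vec n) :=
  {z | ∃ x ∈ A, ∃ y ∈ B, z = (1 / 2 : ℝ) • (x + y)}

/-- The coherent subdivision `π(F^φ)` is tight. -/
def TightSub {n : ℕ} (P : Set (Vec n)) (v : Vec n) : Prop :=
  ∀ F G : Set (Vec n), IsFace P F → IsFace P G → F.Nonempty → G.Nonempty →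
    InFphi P v F G → sdim F + sdim G = sdim (avgSet F G)

/-- `d` is a direction of an edge of `P ∩ ρ_z P` for some `z ∈ P`; the hyperplanes of the
fundamental hyperplane arrangement `H_P` are the orthogonal complements of such directions. -/
def EdgeDir {n : ℕ} (P : Set (Vec n)) (d : Vec n) : Prop :=
  d ≠ 0 ∧ ∃ z ∈ P, ∃ E, IsEdge (P ∩ reflP z P) E ∧ d ∈ (affineSpan ℝ E).direction

/-- The cone `cone(-N_P(F) ∪ N_P(G))`. -/
def diagCone {n : ℕ} (P F G : Set (Vec n)) : Set (Vec n) :=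
  coneOf ((Neg.neg '' normalCone P F) ∪ normalCone P G)


/-- `v` and `w` belong to the same chamber of the fundamental hyperplane arrangement `H_P`:
they lie strictly on the same side of every hyperplane of `H_P`, i.e. they pair with a strictly
positive product against every direction of an edge of `P ∩ ρ_z P`, `z ∈ P`. -/
def SameChamber {n : ℕ} (P : Set (Vec n)) (v w : Vec n) : Prop :=
  ∀ d, EdgeDir P d → 0 < dot d v * dot d w

section Aux

variable {n : ℕ}

lemma dot_comm (x y : Vec n) : dot x y = dot y x := by
  simp [dot, mul_comm]

lemma dot_add_right (c x y : Vec n) : dot c (x + y) = dot c x + dot c y := by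
  simp [dot, mul_add, Finset.sum_add_distrib]

lemma dot_smul_right (c : Vec n) (r : ℝ) (x : Vec n) : dot c (r • x) = r * dot c x := by
  simp only [dot, Pi.smul_apply, smul_eq_mul, Finset.mul_sum]
  exact Finset.sum_congr rfl fun i _ => by ring

lemma dot_neg_right (c x : Vec n) : dot c (-x) = -dot c x := by
  simp [dot, Finset.sum_neg_distrib]

lemma dot_sub_right (c x y : Vec n) : dot c (x - y) = dot c x - dot c y := by
  simp [dot, mul_sub, Finset.sum_sub_distrib]

lemma dot_add_left (a b y : Vec n) : dot (a + b) y = dot a y + dot b y := by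
  rw [dot_comm, dot_add_right, dot_comm y a, dot_comm y b]

lemma dot_smul_left (r : ℝ) (a y : Vec n) : dot (r • a) y = r * dot a y := by
  rw [dot_comm, dot_smul_right, dot_comm y a]

lemma dot_neg_left (a y : Vec n) : dot (-a) y = -dot a y := by
  rw [dot_comm, dot_neg_right, dot_comm y a]

lemma dot_self_nonneg (c : Vec n) : 0 ≤ dot c c :=
  Finset.sum_nonneg fun i _ => mul_self_nonneg _

lemma dot_self_pos {c : Vec n} (hc : c ≠ 0) : 0 < dot c c := by
  rcases lt_or_eq_of_le (dot_self_nonneg c) with h | h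
  · exact h
  · exfalso; apply hc
    have h0 : ∀ i ∈ Finset.univ, c i * c i = 0 := by
      rw [← Finset.sum_eq_zero_iff_of_nonneg fun i _ => mul_self_nonneg (c i)]
      exact h.symm
    funext i
    exact mul_self_eq_zero.1 (h0 i (Finset.mem_univ i))

lemma dot_sum_right {α : Type*} (c : Vec n) (T : Finset α) (f : α → Vec n) :
    dot c (∑ s ∈ T, f s) = ∑ s ∈ T, dot c (f s) := by
  simp only [dot, Finset.sum_apply, Finset.mul_sum]
  exact Finset.sum_comm

lemma dot_combo (c : Vec n) (T : Finset (Vec n)) (w : Vec n → ℝ) :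
    dot c (∑ y ∈ T, w y • y) = ∑ y ∈ T, w y * dot c y := by
  rw [dot_sum_right]
  exact Finset.sum_congr rfl fun y _ => dot_smul_right c (w y) y

/-- The set of maximizers of `dot c` on a finite set `T`. -/
noncomputable def amax (c : Vec n) (T : Finset (Vec n)) : Finset (Vec n) :=
  T.filter (fun t => ∀ t' ∈ T, dot c t' ≤ dot c t)

lemma mem_amax {c : Vec n} {T : Finset (Vec n)} {t : Vec n} :
    t ∈ amax c T ↔ t ∈ T ∧ ∀ t' ∈ T, dot c t' ≤ dot c t :=
  Finset.mem_filter

lemma amax_subset {c : Vec n} {T : Finset (Vec n)} : amax c T ⊆ T :=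
  Finset.filter_subset _ _

lemma amax_nonempty (c : Vec n) {T : Finset (Vec n)} (hT : T.Nonempty) :
    (amax c T).Nonempty := by
  obtain ⟨t, ht, hmax⟩ := T.exists_max_image (dot c) hT
  exact ⟨t, mem_amax.2 ⟨ht, hmax⟩⟩

lemma dot_amax_eq {c : Vec n} {T : Finset (Vec n)} {a b : Vec n}
    (ha : a ∈ amax c T) (hb : b ∈ amax c T) : dot c a = dot c b :=
  le_antisymm ((mem_amax.1 hb).2 a (amax_subset ha)) ((mem_amax.1 ha).2 b (amax_subset hb))

lemma dot_lt_of_not_mem_amax {c : Vec n} {T : Finset (Vec n)} {t t₀ : Vec n}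
    (ht : t ∈ T) (hnt : t ∉ amax c T) (ht₀ : t₀ ∈ amax c T) : dot c t < dot c t₀ := by
  rw [mem_amax] at hnt
  push_neg at hnt
  obtain ⟨t', ht', hlt⟩ := hnt ht
  exact lt_of_lt_of_le hlt ((mem_amax.1 ht₀).2 t' ht')

lemma dot_le_on_hull {c : Vec n} {T : Finset (Vec n)} {t₀ x : Vec n}
    (ht₀ : t₀ ∈ amax c T) (hx : x ∈ convexHull ℝ (↑T : Set (Vec n))) :
    dot c x ≤ dot c t₀ := by
  obtain ⟨w, hw0, hw1, hwx⟩ := Finset.mem_convexHull'.1 hx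
  calc dot c x = ∑ y ∈ T, w y * dot c y := by rw [← hwx, dot_combo]
    _ ≤ ∑ y ∈ T, w y * dot c t₀ :=
        Finset.sum_le_sum fun y hy =>
          mul_le_mul_of_nonneg_left ((mem_amax.1 ht₀).2 y hy) (hw0 y hy)
    _ = dot c t₀ := by rw [← Finset.sum_mul, hw1, one_mul]

/-- The face of the polytope `convexHull ↑T` in direction `c` is the hull of `amax c T`. -/
lemma face_eq_hull_amax (T : Finset (Vec n)) (hT : T.Nonempty) (c : Vec n) :
    {x ∈ convexHull ℝ (↑T : Set (Vec n)) |
        ∀ y ∈ convexHull ℝ (↑T : Set (Vec n)), dot c y ≤ dot c x}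
      = convexHull ℝ (↑(amax c T) : Set (Vec n)) := by
  obtain ⟨t₀, ht₀⟩ := amax_nonempty c hT
  ext x
  constructor
  · rintro ⟨hxQ, hxmax⟩
    have hmem : t₀ ∈ convexHull ℝ (↑T : Set (Vec n)) :=
      subset_convexHull ℝ _ (Finset.mem_coe.2 (amax_subset ht₀))
    have hval : dot c x = dot c t₀ := le_antisymm (dot_le_on_hull ht₀ hxQ) (hxmax t₀ hmem)
    obtain ⟨w, hw0, hw1, hwx⟩ := Finset.mem_convexHull'.1 hxQ
    have hsupp : ∀ y ∈ T, y ∉ amax c T → w y = 0 := by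
      intro y hy hny
      by_contra h0
      have hwy : 0 < w y := lt_of_le_of_ne (hw0 y hy) (Ne.symm h0)
      have hstrict : dot c x < dot c t₀ := by
        rw [← hwx, dot_combo]
        calc ∑ s ∈ T, w s * dot c s < ∑ s ∈ T, w s * dot c t₀ := by
              apply Finset.sum_lt_sum
              · exact fun s hs => mul_le_mul_of_nonneg_left
                  ((mem_amax.1 ht₀).2 s hs) (hw0 s hs)
              · exact ⟨y, hy, mul_lt_mul_of_pos_left (dot_lt_of_not_mem_amax hy hny ht₀) hwy⟩
          _ = dot c t₀ := by rw [← Finset.sum_mul, hw1, one_mul]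
      exact absurd hval (ne_of_lt hstrict)
    apply Finset.mem_convexHull'.2
    refine ⟨w, fun y hy => hw0 y (amax_subset hy), ?_, ?_⟩
    · rw [Finset.sum_subset amax_subset]
      · exact hw1
      · exact hsupp
    · rw [Finset.sum_subset amax_subset]
      · exact hwx
      · intro y hy hny; rw [hsupp y hy hny, zero_smul]
  · intro hx
    have hxQ : x ∈ convexHull ℝ (↑T : Set (Vec n)) :=
      convexHull_mono (Finset.coe_subset.2 amax_subset) hx
    refine ⟨hxQ, fun y hy => ?_⟩
    obtain ⟨w, hw0, hw1, hwx⟩ := Finset.mem_convexHull'.1 hx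
    have hxval : dot c x = dot c t₀ := by
      rw [← hwx, dot_combo]
      calc ∑ s ∈ amax c T, w s * dot c s = ∑ s ∈ amax c T, w s * dot c t₀ :=
            Finset.sum_congr rfl fun s hs => by rw [dot_amax_eq hs ht₀]
        _ = dot c t₀ := by rw [← Finset.sum_mul, hw1, one_mul]
    rw [hxval]
    exact dot_le_on_hull ht₀ hy

/-- Face-of-face: the maximizers of `c'` within the maximizers of `c` are the maximizers of a
single functional. -/
lemma amax_amax (T : Finset (Vec n)) (hT : T.Nonempty) (c c' : Vec n) :
    ∃ c'', amax c'' T = amax c' (amax c T) := by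
  by_cases hA : amax c T = T
  · exact ⟨c', by rw [hA]⟩
  · obtain ⟨t₀, ht₀⟩ := amax_nonempty c hT
    have hdiffne : (T \ amax c T).Nonempty := by
      obtain ⟨m', hm'T, hm'A⟩ := Finset.exists_of_ssubset (lt_of_le_of_ne amax_subset hA)
      exact ⟨m', Finset.mem_sdiff.2 ⟨hm'T, hm'A⟩⟩
    obtain ⟨m, hm, hmmax⟩ := (T \ amax c T).exists_max_image (dot c) hdiffne
    have hmT := (Finset.mem_sdiff.1 hm).1
    have hmA := (Finset.mem_sdiff.1 hm).2
    set δ := dot c t₀ - dot c m with hδdef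
    have hδ : 0 < δ := sub_pos.2 (dot_lt_of_not_mem_amax hmT hmA ht₀)
    obtain ⟨tB, htB, hB⟩ := T.exists_max_image (fun t => |dot c' t|) hT
    set B := |dot c' tB| with hBdef
    have hB0 : 0 ≤ B := abs_nonneg _
    set K := (2 * B + 1) / δ with hKdef
    have hK : 0 < K := by positivity
    have hKδ : K * δ = 2 * B + 1 := div_mul_cancel₀ _ (ne_of_gt hδ)
    refine ⟨K • c + c', ?_⟩
    have hval : ∀ y, dot (K • c + c') y = K * dot c y + dot c' y := fun y => by
      rw [dot_add_left, dot_smul_left]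
    have keygap : ∀ a ∈ amax c T, ∀ t ∈ T, t ∉ amax c T →
        dot (K • c + c') t < dot (K • c + c') a := by
      intro a ha t ht hnt
      rw [hval, hval]
      have h1 : dot c t ≤ dot c m := hmmax t (Finset.mem_sdiff.2 ⟨ht, hnt⟩)
      have h2 : dot c a = dot c t₀ := dot_amax_eq ha ht₀
      have h3 : |dot c' a| ≤ B := hB a (amax_subset ha)
      have h4 : |dot c' t| ≤ B := hB t ht
      have h5 : K * δ ≤ K * (dot c a - dot c t) := by
        apply mul_le_mul_of_nonneg_left _ hK.le
        rw [h2, hδdef]; linarith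
      rw [abs_le] at h3 h4
      nlinarith
    ext x
    rw [mem_amax, mem_amax]
    constructor
    · rintro ⟨hxT, hxmax⟩
      have hxA : x ∈ amax c T := by
        by_contra hnx
        exact absurd (hxmax t₀ (amax_subset ht₀))
          (not_le.2 (keygap t₀ ht₀ x hxT hnx))
      refine ⟨hxA, fun a ha => ?_⟩
      have := hxmax a (amax_subset ha)
      rw [hval, hval] at this
      have hceq : dot c a = dot c x := dot_amax_eq ha hxA
      rw [hceq] at this
      linarith
    · rintro ⟨hxA, hxmax⟩
      refine ⟨amax_subset hxA, fun t ht => ?_⟩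
      by_cases htA : t ∈ amax c T
      · rw [hval, hval]
        have hceq : dot c t = dot c x := dot_amax_eq htA hxA
        have := hxmax t htA
        rw [hceq]
        linarith
      · exact le_of_lt (keygap x hxA t ht htA)

lemma exists_pair_of_rank {A : Finset (Vec n)}
    (h : 1 ≤ Module.finrank ℝ (vectorSpan ℝ (↑A : Set (Vec n)))) :
    ∃ a ∈ A, ∃ b ∈ A, a ≠ b := by
  by_contra hno
  push_neg at hno
  have hsub : ((↑A : Set (Vec n)) -ᵥ (↑A : Set (Vec n))) ⊆ {0} := by
    rintro p ⟨a, ha, b, hb, rfl⟩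
    simp only [Set.mem_singleton_iff, vsub_eq_sub, sub_eq_zero]
    exact hno a ha b hb
  have hbot : vectorSpan ℝ (↑A : Set (Vec n)) = ⊥ := by
    rw [vectorSpan_def, ← Submodule.span_empty (R := ℝ) (M := Vec n)]
    apply le_antisymm
    · rw [Submodule.span_le]
      intro p hp
      have := hsub hp
      simp only [Set.mem_singleton_iff] at this
      simp [this]
    · exact Submodule.span_mono (Set.empty_subset _)
  rw [hbot] at h
  simp [finrank_bot] at h

lemma one_le_rank_of_pair {A : Set (Vec n)} {a b : Vec n}
    (ha : a ∈ A) (hb : b ∈ A) (hne : a ≠ b) :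
    1 ≤ Module.finrank ℝ (vectorSpan ℝ A) := by
  have hmem : a - b ∈ vectorSpan ℝ A := by
    have := vsub_mem_vectorSpan ℝ ha hb
    rwa [vsub_eq_sub] at this
  have hne0 : a - b ≠ 0 := sub_ne_zero.2 hne
  have : Nontrivial (vectorSpan ℝ A) :=
    nontrivial_of_ne ⟨a - b, hmem⟩ 0 (by simp [Submodule.mk_eq_zero, hne0])
  exact Module.finrank_pos_iff.2 this

/-- Tilting lemma: if the maximizer face has dimension ≥ 2, one can tilt the functional to get a
proper maximizer set with at least two points. -/
lemma exists_tilt (U : Finset (Vec n))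
    (h2 : 2 ≤ Module.finrank ℝ (vectorSpan ℝ (↑U : Set (Vec n)))) :
    ∃ c₁, amax c₁ U ≠ U ∧ ∃ a ∈ amax c₁ U, ∃ b ∈ amax c₁ U, a ≠ b := by
  obtain ⟨u₁, hu₁, u₂, hu₂, hu12⟩ := exists_pair_of_rank (A := U) (by omega)
  set c := u₁ - u₂ with hcdef
  have hc0 : c ≠ 0 := sub_ne_zero.2 hu12
  have hcc : 0 < dot c c := dot_self_pos hc0
  by_cases hA2 : ∃ a ∈ amax c U, ∃ b ∈ amax c U, a ≠ b
  · refine ⟨c, ?_, hA2⟩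
    intro hEq
    have hu₂A : u₂ ∈ amax c U := by rw [hEq]; exact hu₂
    have := (mem_amax.1 hu₂A).2 u₁ hu₁
    have hlt : dot c u₂ < dot c u₁ := by
      have : dot c u₁ - dot c u₂ = dot c c := by rw [← dot_sub_right, hcdef]
      linarith
    linarith
  · push_neg at hA2
    have hUne : U.Nonempty := ⟨u₁, hu₁⟩
    obtain ⟨x₀, hx₀⟩ := amax_nonempty c hUne
    have hx₀U : x₀ ∈ U := amax_subset hx₀
    have hstrict : ∀ u ∈ U, u ≠ x₀ → dot c u < dot c x₀ := by
      intro u hu hne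
      have hnA : u ∉ amax c U := fun hA => hne (hA2 u hA x₀ hx₀)
      exact dot_lt_of_not_mem_amax hu hnA hx₀
    have hs : ∃ s ∈ U, s - x₀ ∉ Submodule.span ℝ ({c} : Set (Vec n)) := by
      by_contra hno
      push_neg at hno
      have hle : vectorSpan ℝ (↑U : Set (Vec n)) ≤ Submodule.span ℝ ({c} : Set (Vec n)) := by
        rw [vectorSpan_def, Submodule.span_le]
        rintro p ⟨a, ha, b, hb, rfl⟩
        simp only [vsub_eq_sub]
        rw [show a - b = (a - x₀) - (b - x₀) by abel]
        exact Submodule.sub_mem _ (hno a ha) (hno b hb)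
      have hmono := Submodule.finrank_mono hle
      have hr1 : Module.finrank ℝ (Submodule.span ℝ ({c} : Set (Vec n))) = 1 :=
        finrank_span_singleton hc0
      rw [hr1] at hmono
      omega
    obtain ⟨s, hsU, hsspan⟩ := hs
    have hsx₀ : s ≠ x₀ := by
      intro h
      apply hsspan
      rw [h, sub_self]
      exact Submodule.zero_mem _
    set e := s - x₀ with hedef
    have he0 : e ≠ 0 := sub_ne_zero.2 hsx₀
    set p := fun u : Vec n => dot c x₀ - dot c u with hpdef
    set q := fun u : Vec n => dot e x₀ - dot e u with hqdef
    have hqs : q s < 0 := by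
      have : dot e s - dot e x₀ = dot e e := by rw [← dot_sub_right, hedef]
      have hee := dot_self_pos he0
      simp only [hqdef]
      linarith
    set R := U.filter (fun u => q u < 0) with hRdef
    have hsR : s ∈ R := Finset.mem_filter.2 ⟨hsU, hqs⟩
    obtain ⟨u', hu'R, hu'min⟩ := R.exists_min_image (fun u => p u / (-q u)) ⟨s, hsR⟩
    have hu'U : u' ∈ U := (Finset.mem_filter.1 hu'R).1
    have hqu' : q u' < 0 := (Finset.mem_filter.1 hu'R).2
    have hu'x₀ : u' ≠ x₀ := by
      intro h
      rw [h] at hqu'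
      simp [hqdef] at hqu'
    have hpu' : 0 < p u' := by
      simp only [hpdef]
      linarith [hstrict u' hu'U hu'x₀]
    set tstar := p u' / (-q u') with htdef
    have htpos : 0 < tstar := div_pos hpu' (by linarith)
    set c₁ := c + tstar • e with hc₁def
    have hval : ∀ y, dot c₁ y = dot c y + tstar * dot e y := fun y => by
      rw [hc₁def, dot_add_left, dot_smul_left]
    have claim1 : ∀ u ∈ U, dot c₁ u ≤ dot c₁ x₀ := by
      intro u hu
      rw [hval, hval]
      have hkey : 0 ≤ p u + tstar * q u := by
        by_cases huR : u ∈ R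
        · have h2 : tstar ≤ p u / (-q u) := hu'min u huR
          have hqu : q u < 0 := (Finset.mem_filter.1 huR).2
          have hpu : 0 ≤ p u := by
            simp only [hpdef]
            linarith [(mem_amax.1 hx₀).2 u hu]
          have hqpos : (0:ℝ) < -q u := by linarith
          have h3 : tstar * (-q u) ≤ p u := by
            rw [le_div_iff₀ hqpos] at h2
            linarith
          nlinarith
        · have hqu : ¬ q u < 0 := fun h => huR (Finset.mem_filter.2 ⟨hu, h⟩)
          push_neg at hqu
          have hpu : 0 ≤ p u := by
            simp only [hpdef]
            linarith [(mem_amax.1 hx₀).2 u hu]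
          nlinarith
      simp only [hpdef, hqdef] at hkey
      linarith
    have hx₀mem : x₀ ∈ amax c₁ U := mem_amax.2 ⟨hx₀U, claim1⟩
    have hu'val : dot c₁ u' = dot c₁ x₀ := by
      rw [hval, hval]
      have : p u' + tstar * q u' = 0 := by
        have hq0 : (-q u') ≠ 0 := by linarith
        have hcan : tstar * (-q u') = p u' := by
          rw [htdef]; exact div_mul_cancel₀ _ hq0
        linear_combination -hcan
      simp only [hpdef, hqdef] at this
      linarith
    have hu'mem : u' ∈ amax c₁ U := by
      refine mem_amax.2 ⟨hu'U, fun t' ht' => ?_⟩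
      rw [hu'val]
      exact claim1 t' ht'
    refine ⟨c₁, ?_, x₀, hx₀mem, u', hu'mem, fun h => hu'x₀ h.symm⟩
    intro hEq
    have hconst : ∀ a ∈ U, ∀ b ∈ U, dot c₁ a = dot c₁ b := by
      intro a ha b hb
      exact dot_amax_eq (by rw [hEq]; exact ha) (by rw [hEq]; exact hb)
    have hc₁span : c₁ ∈ vectorSpan ℝ (↑U : Set (Vec n)) := by
      apply Submodule.add_mem
      · have := vsub_mem_vectorSpan ℝ (Finset.mem_coe.2 hu₁) (Finset.mem_coe.2 hu₂)
        rwa [vsub_eq_sub] at this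
      · apply Submodule.smul_mem
        have := vsub_mem_vectorSpan ℝ (Finset.mem_coe.2 hsU) (Finset.mem_coe.2 hx₀U)
        rwa [vsub_eq_sub] at this
    have hzero : ∀ d ∈ vectorSpan ℝ (↑U : Set (Vec n)), dot c₁ d = 0 := by
      intro d hd
      rw [vectorSpan_def] at hd
      induction hd using Submodule.span_induction with
      | mem x hx =>
        obtain ⟨a, ha, b, hb, rfl⟩ := hx
        simp only [vsub_eq_sub]
        rw [dot_sub_right, hconst a ha b hb, sub_self]
      | zero => simp [dot]
      | add x y _ _ hx hy => rw [dot_add_right, hx, hy, add_zero]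
      | smul r x _ hx => rw [dot_smul_right, hx, mul_zero]
    have hc₁0 : c₁ = 0 := by
      by_contra h0
      exact absurd (hzero c₁ hc₁span) (ne_of_gt (dot_self_pos h0))
    apply hsspan
    have : e = tstar⁻¹ • (-c) := by
      have h1 : c + tstar • e = 0 := hc₁0
      have h2 : tstar • e = -c := by linear_combination (norm := module) h1
      rw [← h2, smul_smul, inv_mul_cancel₀ (ne_of_gt htpos), one_smul]
    rw [hedef] at this ⊢
    rw [this]
    apply Submodule.smul_mem
    exact Submodule.neg_mem _ (Submodule.mem_span_singleton_self c)

/-- Every positive-dimensional face of a polytope contains an edge (on the level of vertex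
maximizer sets). -/
lemma exists_edge_set : ∀ (N : ℕ) (T : Finset (Vec n)) (c₀ : Vec n),
    (amax c₀ T).card ≤ N →
    1 ≤ Module.finrank ℝ (vectorSpan ℝ (↑(amax c₀ T) : Set (Vec n))) →
    ∃ c, amax c T ⊆ amax c₀ T ∧
      Module.finrank ℝ (vectorSpan ℝ (↑(amax c T) : Set (Vec n))) = 1 := by
  intro N
  induction N with
  | zero =>
    intro T c₀ hcard hrank
    exfalso
    obtain ⟨a, ha', _⟩ := exists_pair_of_rank hrank
    have := Finset.card_pos.2 ⟨a, ha'⟩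
    omega
  | succ N ih =>
    intro T c₀ hcard hrank
    rcases eq_or_lt_of_le hrank with heq | hlt
    · exact ⟨c₀, Finset.Subset.refl _, heq.symm⟩
    · have h2 : 2 ≤ Module.finrank ℝ (vectorSpan ℝ (↑(amax c₀ T) : Set (Vec n))) := hlt
      obtain ⟨c₁, hne, a, ha, b, hb, hab⟩ := exists_tilt (amax c₀ T) h2
      have hTne : T.Nonempty := by
        obtain ⟨a', ha', _⟩ := exists_pair_of_rank (A := amax c₀ T) hrank
        exact ⟨a', amax_subset ha'⟩
      obtain ⟨c₂, hc₂⟩ := amax_amax T hTne c₀ c₁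
      have hsub : amax c₂ T ⊆ amax c₀ T := by rw [hc₂]; exact amax_subset
      have hltcard : (amax c₂ T).card < (amax c₀ T).card := by
        rw [hc₂]
        exact Finset.card_lt_card (lt_of_le_of_ne amax_subset hne)
      have hrank2 : 1 ≤ Module.finrank ℝ (vectorSpan ℝ (↑(amax c₂ T) : Set (Vec n))) := by
        rw [hc₂]
        exact one_le_rank_of_pair (Finset.mem_coe.2 ha) (Finset.mem_coe.2 hb) hab
      obtain ⟨c, hsub', hr⟩ := ih T c₂ (by omega) hrank2
      exact ⟨c, hsub'.trans hsub, hr⟩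

/-- If `(convexHull V, u)` is oriented then `u` has a unique maximizer among `V`. -/
lemma amax_singleton (V : Finset (Vec n)) (u : Vec n)
    (hV : V.Nonempty)
    (hor : Oriented (convexHull ℝ (↑V : Set (Vec n))) u) :
    ∃ a, amax u V = {a} := by
  obtain ⟨a, ha⟩ := amax_nonempty u hV
  refine ⟨a, Finset.eq_singleton_iff_unique_mem.2 ⟨ha, fun b hb => ?_⟩⟩
  by_contra hne
  have hrank : 1 ≤ Module.finrank ℝ (vectorSpan ℝ (↑(amax u V) : Set (Vec n))) :=
    one_le_rank_of_pair (Finset.mem_coe.2 hb) (Finset.mem_coe.2 ha) hne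
  obtain ⟨c, hsub, hr1⟩ := exists_edge_set (amax u V).card V u le_rfl hrank
  set E : Set (Vec n) :=
    {x ∈ convexHull ℝ (↑V : Set (Vec n)) |
      ∀ y ∈ convexHull ℝ (↑V : Set (Vec n)), dot c y ≤ dot c x} with hEdef
  have hEeq : E = convexHull ℝ (↑(amax c V) : Set (Vec n)) := face_eq_hull_amax V hV c
  have hFace : IsFace (convexHull ℝ (↑V : Set (Vec n))) E := ⟨c, rfl⟩
  have hdir : (affineSpan ℝ E).direction = vectorSpan ℝ (↑(amax c V) : Set (Vec n)) := by
    have hsp : affineSpan ℝ E = affineSpan ℝ (↑(amax c V) : Set (Vec n)) := by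
      rw [hEeq, affineSpan_convexHull]
    rw [hsp, direction_affineSpan]
  have hsdim : sdim E = 1 := by
    rw [sdim, hdir]
    exact hr1
  obtain ⟨a₁, ha₁, b₁, hb₁, hab₁⟩ := exists_pair_of_rank (A := amax c V) (by rw [hr1])
  have hd : a₁ - b₁ ∈ (affineSpan ℝ E).direction := by
    rw [hdir]
    have := vsub_mem_vectorSpan ℝ (Finset.mem_coe.2 ha₁) (Finset.mem_coe.2 hb₁)
    rwa [vsub_eq_sub] at this
  have hd0 : a₁ - b₁ ≠ 0 := sub_ne_zero.2 hab₁
  have := hor E ⟨hFace, hsdim⟩ (a₁ - b₁) hd hd0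
  apply this
  have heq : dot u a₁ = dot u b₁ := dot_amax_eq (c := u) (hsub ha₁) (hsub hb₁)
  rw [dot_comm, dot_sub_right, heq, sub_self]

/-- If `v` and `w` pair positively against every edge direction of `convexHull V`, then they have
the same maximizer set on `V`. -/
lemma amax_chamber (V : Finset (Vec n)) (hV : V.Nonempty) (v w : Vec n)
    (H : ∀ E, IsEdge (convexHull ℝ (↑V : Set (Vec n))) E →
      ∀ d ∈ (affineSpan ℝ E).direction, d ≠ 0 → 0 < dot d v * dot d w) :
    amax v V = amax w V := by
  set u : ℝ → Vec n := fun t => (1 - t) • v + t • w with hudef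
  have hu0 : u 0 = v := by simp [hudef]
  have hu1 : u 1 = w := by simp [hudef]
  have hval : ∀ t y, dot (u t) y = (1 - t) * dot v y + t * dot w y := by
    intro t y
    rw [hudef]
    simp only
    rw [dot_add_left, dot_smul_left, dot_smul_left]
  have hval2 : ∀ (t : ℝ) (y : Vec n), dot y (u t) = (1 - t) * dot y v + t * dot y w := by
    intro t y
    rw [hudef]
    simp only
    rw [dot_add_right, dot_smul_right, dot_smul_right]
  have horient : ∀ t ∈ Set.Icc (0:ℝ) 1, Oriented (convexHull ℝ (↑V : Set (Vec n))) (u t) := by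
    intro t ht E hE d hd hd0
    have hp := H E hE d hd hd0
    rw [hval2]
    rcases mul_pos_iff.1 hp with ⟨h1, h2⟩ | ⟨h1, h2⟩
    · have : 0 < (1 - t) * dot d v + t * dot d w := by
        rcases eq_or_lt_of_le ht.1 with h | h
        · rw [← h]; simpa using h1
        · nlinarith [ht.2]
      exact ne_of_gt this
    · have : (1 - t) * dot d v + t * dot d w < 0 := by
        rcases eq_or_lt_of_le ht.1 with h | h
        · rw [← h]; simpa using h1
        · nlinarith [ht.2]
      exact ne_of_lt this
  have hsing : ∀ t ∈ Set.Icc (0:ℝ) 1, ∃ x, amax (u t) V = {x} := fun t ht =>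
    amax_singleton V (u t) hV (horient t ht)
  obtain ⟨a, hav⟩ := hsing 0 (Set.mem_Icc.2 ⟨le_rfl, zero_le_one⟩)
  obtain ⟨b, hbw⟩ := hsing 1 (Set.mem_Icc.2 ⟨zero_le_one, le_rfl⟩)
  rw [hu0] at hav
  rw [hu1] at hbw
  have haV : a ∈ V := amax_subset (hav ▸ Finset.mem_singleton_self a)
  -- main connectedness argument: a = b
  have hab : a = b := by
    by_contra hne
    set C : Set ℝ := ⋂ s ∈ V, {t : ℝ | dot (u t) s ≤ dot (u t) a} with hCdef
    set D : Set ℝ := ⋃ x ∈ V.erase a, ⋂ s ∈ V, {t : ℝ | dot (u t) s ≤ dot (u t) x} with hDdef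
    have hcont : ∀ y : Vec n, Continuous fun t : ℝ => dot (u t) y := by
      intro y
      have : (fun t : ℝ => dot (u t) y) = fun t : ℝ => (1 - t) * dot v y + t * dot w y :=
        funext fun t => hval t y
      rw [this]
      fun_prop
    have hC : IsClosed C :=
      isClosed_biInter fun s _ => isClosed_le (hcont s) (hcont a)
    have hD : IsClosed D := by
      apply Set.Finite.isClosed_biUnion (Finset.finite_toSet _)
      intro x _
      exact isClosed_biInter fun s _ => isClosed_le (hcont s) (hcont x)
    have hmemC : ∀ t : ℝ, t ∈ C ↔ ∀ s ∈ V, dot (u t) s ≤ dot (u t) a := by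
      intro t
      simp [hCdef, Set.mem_iInter]
    have hcover : Set.Icc (0:ℝ) 1 ⊆ C ∪ D := by
      intro t ht
      obtain ⟨x, hx⟩ := hsing t ht
      have hxmem : x ∈ amax (u t) V := hx ▸ Finset.mem_singleton_self x
      by_cases hxa : x = a
      · left
        rw [hmemC]
        intro s hs
        rw [← hxa]
        exact (mem_amax.1 hxmem).2 s hs
      · right
        rw [hDdef]
        apply Set.mem_biUnion (Finset.mem_coe.2 (Finset.mem_erase.2 ⟨hxa, amax_subset hxmem⟩))
        simp only [Set.mem_iInter, Set.mem_setOf_eq]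
        intro s hs
        exact (mem_amax.1 hxmem).2 s hs
    have hdisj : Set.Icc (0:ℝ) 1 ∩ (C ∩ D) = ∅ := by
      rw [Set.eq_empty_iff_forall_notMem]
      rintro t ⟨ht, htC, htD⟩
      obtain ⟨xt, hxt⟩ := hsing t ht
      rw [hDdef] at htD
      simp only [Set.mem_iUnion, Set.mem_iInter, Set.mem_setOf_eq] at htD
      obtain ⟨x, hxV, hxmax⟩ := htD
      have hxV' := Finset.mem_coe.1 hxV
      have hamem : a ∈ amax (u t) V := mem_amax.2 ⟨haV, (hmemC t).1 htC⟩
      have hxmem : x ∈ amax (u t) V :=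
        mem_amax.2 ⟨(Finset.mem_erase.1 hxV').2, hxmax⟩
      rw [hxt, Finset.mem_singleton] at hamem hxmem
      exact (Finset.mem_erase.1 hxV').1 (hxmem.trans hamem.symm)
    have h0 : (0:ℝ) ∈ Set.Icc (0:ℝ) 1 ∩ C := by
      refine ⟨Set.mem_Icc.2 ⟨le_rfl, zero_le_one⟩, (hmemC 0).2 ?_⟩
      intro s hs
      rw [hu0]
      exact (mem_amax.1 (hav ▸ Finset.mem_singleton_self a)).2 s hs
    have h1 : (1:ℝ) ∈ Set.Icc (0:ℝ) 1 ∩ D := by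
      refine ⟨Set.mem_Icc.2 ⟨zero_le_one, le_rfl⟩, ?_⟩
      rw [hDdef]
      have hbV : b ∈ V.erase a :=
        Finset.mem_erase.2 ⟨fun h => hne h.symm, amax_subset (hbw ▸ Finset.mem_singleton_self b)⟩
      apply Set.mem_biUnion (Finset.mem_coe.2 hbV)
      simp only [Set.mem_iInter, Set.mem_setOf_eq]
      intro s hs
      rw [hu1]
      exact (mem_amax.1 (hbw ▸ Finset.mem_singleton_self b)).2 s hs
    have := (isPreconnected_closed_iff.1 isPreconnected_Icc) C D hC hD hcover ⟨0, h0⟩ ⟨1, h1⟩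
    rw [Set.eq_empty_iff_forall_notMem] at hdisj
    obtain ⟨t, ht⟩ := this
    exact hdisj t ⟨ht.1, ht.2⟩
  rw [hav, hbw, hab]

/-- `s` appears with positive weight in some convex representation of `x` over `S`. -/
def posWt (S : Finset (Vec n)) (x s : Vec n) : Prop :=
  ∃ w : Vec n → ℝ, (∀ y ∈ S, 0 ≤ w y) ∧ ∑ y ∈ S, w y = 1 ∧ ∑ y ∈ S, w y • y = x ∧ 0 < w s

/-- The set of elements of `S` appearing with positive weight in some representation of `x`. -/
noncomputable def suppF (S : Finset (Vec n)) (x : Vec n) : Finset (Vec n) :=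
  @Finset.filter _ (posWt S x) (Classical.decPred _) S

lemma mem_suppF {S : Finset (Vec n)} {x s : Vec n} :
    s ∈ suppF S x ↔ s ∈ S ∧ posWt S x s :=
  @Finset.mem_filter _ (posWt S x) (Classical.decPred _) S s

lemma suppF_subset {S : Finset (Vec n)} {x : Vec n} : suppF S x ⊆ S :=
  @Finset.filter_subset _ (posWt S x) (Classical.decPred _) S

/-- There is a representation of `x` supported on `suppF S x` with all weights positive. -/
lemma rep_suppF {S : Finset (Vec n)} {x : Vec n}
    (hx : x ∈ convexHull ℝ (↑S : Set (Vec n))) :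
    ∃ w : Vec n → ℝ, (∀ y ∈ suppF S x, 0 < w y) ∧ (∑ y ∈ suppF S x, w y = 1) ∧
      ∑ y ∈ suppF S x, w y • y = x := by
  classical
  obtain ⟨w₀, hw₀0, hw₀1, hw₀x⟩ := Finset.mem_convexHull'.1 hx
  have hne : (suppF S x).Nonempty := by
    have hsum : ∑ y ∈ S, w₀ y ≠ 0 := by rw [hw₀1]; norm_num
    obtain ⟨y, hy, hy0⟩ := Finset.exists_ne_zero_of_sum_ne_zero hsum
    exact ⟨y, mem_suppF.2 ⟨hy, ⟨w₀, hw₀0, hw₀1, hw₀x,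
      lt_of_le_of_ne (hw₀0 y hy) (Ne.symm hy0)⟩⟩⟩
  set k := (suppF S x).card with hkdef
  have hk : 0 < k := Finset.card_pos.2 hne
  have hkR : (0:ℝ) < (k:ℝ) := by exact_mod_cast hk
  have hch : ∀ s ∈ suppF S x, posWt S x s := fun s hs => (mem_suppF.1 hs).2
  choose! W hW1 hW2 hW3 hW4 using hch
  have hsupp : ∀ s ∈ suppF S x, ∀ y ∈ S, y ∉ suppF S x → W s y = 0 := by
    intro s hs y hy hny
    by_contra h0
    have hpos : 0 < W s y := lt_of_le_of_ne (hW1 s hs y hy) (Ne.symm h0)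
    exact hny (mem_suppF.2 ⟨hy, ⟨W s, hW1 s hs, hW2 s hs, hW3 s hs, hpos⟩⟩)
  have hinner : ∀ s ∈ suppF S x, ∑ y ∈ suppF S x, W s y = 1 := by
    intro s hs
    rw [Finset.sum_subset suppF_subset (fun y hy hny => hsupp s hs y hy hny)]
    exact hW2 s hs
  have hinner2 : ∀ s ∈ suppF S x, ∑ y ∈ suppF S x, W s y • y = x := by
    intro s hs
    rw [Finset.sum_subset suppF_subset
      (fun y hy hny => by rw [hsupp s hs y hy hny, zero_smul])]
    exact hW3 s hs
  refine ⟨fun y => (k:ℝ)⁻¹ * ∑ s ∈ suppF S x, W s y, ?_, ?_, ?_⟩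
  · intro y hy
    apply mul_pos (inv_pos.2 hkR)
    apply Finset.sum_pos'
    · exact fun s hs => hW1 s hs y (suppF_subset hy)
    · exact ⟨y, hy, hW4 y hy⟩
  · rw [← Finset.mul_sum]
    rw [show ∑ y ∈ suppF S x, ∑ s ∈ suppF S x, W s y
        = ∑ s ∈ suppF S x, ∑ y ∈ suppF S x, W s y from Finset.sum_comm]
    rw [Finset.sum_congr rfl hinner, Finset.sum_const, Nat.smul_one_eq_cast]
    rw [← hkdef]
    exact inv_mul_cancel₀ (ne_of_gt hkR)
  · have hstep : ∀ y ∈ suppF S x,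
        ((k:ℝ)⁻¹ * ∑ s ∈ suppF S x, W s y) • y
          = (k:ℝ)⁻¹ • ∑ s ∈ suppF S x, W s y • y := by
      intro y _
      rw [mul_smul, Finset.sum_smul, Finset.smul_sum]
    rw [Finset.sum_congr rfl hstep, ← Finset.smul_sum]
    rw [show ∑ y ∈ suppF S x, ∑ s ∈ suppF S x, W s y • y
        = ∑ s ∈ suppF S x, ∑ y ∈ suppF S x, W s y • y from Finset.sum_comm]
    rw [Finset.sum_congr rfl hinner2, Finset.sum_const, ← hkdef]
    rw [← Nat.cast_smul_eq_nsmul ℝ, smul_smul, inv_mul_cancel₀ (ne_of_gt hkR), one_smul]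

lemma mem_hull_suppF {S : Finset (Vec n)} {x : Vec n}
    (hx : x ∈ convexHull ℝ (↑S : Set (Vec n))) :
    x ∈ convexHull ℝ (↑(suppF S x) : Set (Vec n)) := by
  obtain ⟨w, hpos, h1, hx'⟩ := rep_suppF hx
  exact Finset.mem_convexHull'.2 ⟨w, fun y hy => (hpos y hy).le, h1, hx'⟩

/-- Wiggle lemma: if `x'` has the same positive support as `x`, one can move from `x` a bit in
both directions `±(x' - x)` while staying in the hull. -/
lemma wiggle {S : Finset (Vec n)} {x x' : Vec n}
    (hxS : x ∈ convexHull ℝ (↑S : Set (Vec n))) (hx'S : x' ∈ convexHull ℝ (↑S : Set (Vec n)))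
    (hsupp : suppF S x' = suppF S x) :
    ∃ ε : ℝ, 0 < ε ∧ ε ≤ 1 ∧ ∀ η : ℝ, 0 < η → η ≤ ε →
      x + η • (x' - x) ∈ convexHull ℝ (↑S : Set (Vec n)) ∧
      x - η • (x' - x) ∈ convexHull ℝ (↑S : Set (Vec n)) := by
  obtain ⟨w, hwpos, hw1, hwx⟩ := rep_suppF hxS
  obtain ⟨w', hw'pos, hw'1, hw'x⟩ := rep_suppF hx'S
  rw [hsupp] at hw'pos hw'1 hw'x
  have hAne : (suppF S x).Nonempty := by
    by_contra hA
    rw [Finset.not_nonempty_iff_eq_empty] at hA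
    rw [hA, Finset.sum_empty] at hw1
    norm_num at hw1
  obtain ⟨m, hm, hmmin⟩ := (suppF S x).exists_min_image w hAne
  have hδ : 0 < w m := hwpos m hm
  refine ⟨min (w m / 2) 1, lt_min (by linarith) one_pos, min_le_right _ _, ?_⟩
  intro η hη hηε
  have hη1 : η ≤ 1 := le_trans hηε (min_le_right _ _)
  have hηδ : η ≤ w m / 2 := le_trans hηε (min_le_left _ _)
  constructor
  · have : x + η • (x' - x) = (1 - η) • x + η • x' := by module
    rw [this]
    exact (convex_convexHull ℝ (↑S : Set (Vec n))) hxS hx'S (by linarith) hη.le (by ring)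
  · have hmem : x - η • (x' - x) ∈ convexHull ℝ (↑(suppF S x) : Set (Vec n)) := by
      apply Finset.mem_convexHull'.2
      refine ⟨fun y => (1 + η) * w y - η * w' y, ?_, ?_, ?_⟩
      · intro y hy
        show 0 ≤ (1 + η) * w y - η * w' y
        have hw'le : w' y ≤ 1 := by
          rw [← hw'1]
          exact Finset.single_le_sum (fun z hz => (hw'pos z hz).le) hy
        have hwy : w m ≤ w y := hmmin y hy
        have hwy0 : 0 < w y := hwpos y hy
        have h1 : η * w' y ≤ η := by nlinarith
        nlinarith
      · rw [Finset.sum_sub_distrib, ← Finset.mul_sum, ← Finset.mul_sum, hw1, hw'1]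
        ring
      · have : ∀ y ∈ suppF S x, ((1 + η) * w y - η * w' y) • y
            = (1 + η) • (w y • y) - η • (w' y • y) := by
          intro y _
          rw [sub_smul, mul_smul, mul_smul]
        rw [Finset.sum_congr rfl this, Finset.sum_sub_distrib, ← Finset.smul_sum,
          ← Finset.smul_sum, hwx, hw'x]
        module
    exact convexHull_mono (Finset.coe_subset.2 suppF_subset) hmem

/-- An extreme point of the intersection of two polytopes is determined by its pair of
positive supports. -/
lemma extreme_eq_of_suppF_eq {S T : Finset (Vec n)} {x x' : Vec n}
    (hx : x ∈ (convexHull ℝ (↑S : Set (Vec n)) ∩ convexHull ℝ (↑T : Set (Vec n))).extremePoints ℝ)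
    (hx' : x' ∈ convexHull ℝ (↑S : Set (Vec n)) ∩ convexHull ℝ (↑T : Set (Vec n)))
    (hS : suppF S x' = suppF S x) (hT : suppF T x' = suppF T x) : x' = x := by
  by_contra hne
  have hd0 : x' - x ≠ 0 := sub_ne_zero.2 hne
  obtain ⟨hxQ, hxext⟩ := hx
  obtain ⟨ε₁, hε₁, hε₁1, hw₁⟩ := wiggle hxQ.1 hx'.1 hS
  obtain ⟨ε₂, hε₂, hε₂1, hw₂⟩ := wiggle hxQ.2 hx'.2 hT
  set ε := min ε₁ ε₂ with hεdef
  have hεpos : 0 < ε := lt_min hε₁ hε₂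
  have h₁ := hw₁ ε hεpos (min_le_left _ _)
  have h₂ := hw₂ ε hεpos (min_le_right _ _)
  have hmem₁ : x + ε • (x' - x) ∈
      convexHull ℝ (↑S : Set (Vec n)) ∩ convexHull ℝ (↑T : Set (Vec n)) := ⟨h₁.1, h₂.1⟩
  have hmem₂ : x - ε • (x' - x) ∈
      convexHull ℝ (↑S : Set (Vec n)) ∩ convexHull ℝ (↑T : Set (Vec n)) := ⟨h₁.2, h₂.2⟩
  have hseg : x ∈ openSegment ℝ (x + ε • (x' - x)) (x - ε • (x' - x)) :=
    ⟨1/2, 1/2, by norm_num, by norm_num, by norm_num, by module⟩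
  have := hxext hmem₁ hmem₂ hseg
  have hz : ε • (x' - x) = 0 := by linear_combination (norm := module) this
  rcases smul_eq_zero.1 hz with h | h
  · exact absurd h (ne_of_gt hεpos)
  · exact hd0 h

lemma extremePoints_inter_finite (S T : Finset (Vec n)) :
    ((convexHull ℝ (↑S : Set (Vec n)) ∩ convexHull ℝ (↑T : Set (Vec n))).extremePoints ℝ).Finite := by
  apply Set.Finite.of_finite_image (f := fun x => (suppF S x, suppF T x))
  · apply Set.Finite.subset ((S.powerset ×ˢ T.powerset).finite_toSet)
    rintro p ⟨x, _, rfl⟩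
    rw [Finset.mem_coe, Finset.mem_product]
    exact ⟨Finset.mem_powerset.2 suppF_subset, Finset.mem_powerset.2 suppF_subset⟩
  · intro x hx y hy hxy
    simp only [Prod.ext_iff] at hxy
    exact (extreme_eq_of_suppF_eq hy (extremePoints_subset hx) hxy.1 hxy.2)

/-- The intersection of two polytopes is a polytope. -/
lemma inter_hull_finset (S T : Finset (Vec n)) :
    ∃ V : Finset (Vec n),
      convexHull ℝ (↑S : Set (Vec n)) ∩ convexHull ℝ (↑T : Set (Vec n))
        = convexHull ℝ (↑V : Set (Vec n)) := by
  have hcomp : IsCompact (convexHull ℝ (↑S : Set (Vec n)) ∩ convexHull ℝ (↑T : Set (Vec n))) :=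
    ((S.finite_toSet).isCompact_convexHull ℝ).inter_right ((T.finite_toSet).isClosed_convexHull ℝ)
  have hconv : Convex ℝ (convexHull ℝ (↑S : Set (Vec n)) ∩ convexHull ℝ (↑T : Set (Vec n))) :=
    (convex_convexHull ℝ _).inter (convex_convexHull ℝ _)
  have hfin := extremePoints_inter_finite S T
  refine ⟨hfin.toFinset, ?_⟩
  rw [Set.Finite.coe_toFinset]
  have hKM := closure_convexHull_extremePoints hcomp hconv
  rw [(Set.Finite.isClosed_convexHull ℝ hfin).closure_eq] at hKM
  exact hKM.symm

/-- The reflection map as an affine map. -/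
def reflMap (z : Vec n) : Vec n →ᵃ[ℝ] Vec n where
  toFun := fun x => (2:ℝ) • z - x
  linear := -LinearMap.id
  map_vadd' := by
    intro p v
    simp only [LinearMap.neg_apply, LinearMap.id_apply, vadd_eq_add]
    abel

lemma reflP_hull (z : Vec n) (S : Finset (Vec n)) :
    reflP z (convexHull ℝ (↑S : Set (Vec n)))
      = convexHull ℝ (↑(S.image (fun x => (2:ℝ) • z - x)) : Set (Vec n)) := by
  have h1 : reflP z (convexHull ℝ (↑S : Set (Vec n)))
      = (reflMap z) '' (convexHull ℝ (↑S : Set (Vec n))) := rfl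
  rw [h1, AffineMap.image_convexHull, Finset.coe_image]
  rfl

end Aux

/-- Chamber invariance. If `v` and `w` belong to the same chamber of the
fundamental hyperplane arrangement `H_P`, then `(P, v)` and `(P, w)` are positively oriented
and define the same bot-top diagonal: for every `z ∈ P` the minimizers (resp. maximizers) of
`⟨-, v⟩` and `⟨-, w⟩` on `P ∩ ρ_z P` coincide. -/
theorem stmt8 {n : ℕ} (P : Set (Vec n)) (v w : Vec n)
    (hP : IsPolytope P) (h : SameChamber P v w) :
    PosOriented P v ∧ PosOriented P w ∧
    ∀ z ∈ P,
      {x | IsBotOf (P ∩ reflP z P) v x} = {x | IsBotOf (P ∩ reflP z P) w x} ∧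
      {x | IsTopOf (P ∩ reflP z P) v x} = {x | IsTopOf (P ∩ reflP z P) w x} := by
  obtain ⟨S, hS⟩ := hP
  have hQpoly : ∀ z ∈ P, ∃ V : Finset (Vec n),
      (P ∩ reflP z P = convexHull ℝ (↑V : Set (Vec n))) ∧ V.Nonempty := by
    intro z hz
    obtain ⟨V, hV⟩ := inter_hull_finset S (S.image (fun x => (2:ℝ) • z - x))
    have hQ : P ∩ reflP z P = convexHull ℝ (↑V : Set (Vec n)) := by
      rw [hS] at *
      rw [reflP_hull]
      exact hV
    have hzQ : z ∈ P ∩ reflP z P := by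
      refine ⟨hz, ⟨z, hz, ?_⟩⟩
      module
    rw [hQ] at hzQ
    refine ⟨V, hQ, ?_⟩
    rcases V.eq_empty_or_nonempty with rfl | hne
    · rw [Finset.coe_empty, convexHull_empty] at hzQ
      exact absurd hzQ (Set.notMem_empty z)
    · exact hne
  have hedge : ∀ z ∈ P, ∀ E, IsEdge (P ∩ reflP z P) E →
      ∀ d ∈ (affineSpan ℝ E).direction, d ≠ 0 → 0 < dot d v * dot d w := by
    intro z hz E hE d hd hd0
    exact h d ⟨hd0, z, hz, E, hE, hd⟩
  refine ⟨?_, ?_, ?_⟩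
  · intro z hz E hE d hd hd0
    have hp := hedge z hz E hE d hd hd0
    intro h0
    rw [h0, zero_mul] at hp
    exact lt_irrefl 0 hp
  · intro z hz E hE d hd hd0
    have hp := hedge z hz E hE d hd hd0
    intro h0
    rw [h0, mul_zero] at hp
    exact lt_irrefl 0 hp
  · intro z hz
    obtain ⟨V, hQ, hVne⟩ := hQpoly z hz
    have Hvw : ∀ E, IsEdge (convexHull ℝ (↑V : Set (Vec n))) E →
        ∀ d ∈ (affineSpan ℝ E).direction, d ≠ 0 → 0 < dot d v * dot d w := by
      intro E hE
      rw [← hQ] at hE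
      exact hedge z hz E hE
    have Hneg : ∀ E, IsEdge (convexHull ℝ (↑V : Set (Vec n))) E →
        ∀ d ∈ (affineSpan ℝ E).direction, d ≠ 0 → 0 < dot d (-v) * dot d (-w) := by
      intro E hE d hd hd0
      rw [dot_neg_right, dot_neg_right, neg_mul_neg]
      exact Hvw E hE d hd hd0
    have htopset : ∀ ξ : Vec n, {x | IsTopOf (P ∩ reflP z P) ξ x}
        = convexHull ℝ (↑(amax ξ V) : Set (Vec n)) := by
      intro ξ
      have h1 : {x | IsTopOf (P ∩ reflP z P) ξ x}
          = {x ∈ convexHull ℝ (↑V : Set (Vec n)) |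
              ∀ y ∈ convexHull ℝ (↑V : Set (Vec n)), dot ξ y ≤ dot ξ x} := by
        rw [← hQ]
        rfl
      rw [h1, face_eq_hull_amax V hVne ξ]
    have hbotset : ∀ ξ : Vec n, {x | IsBotOf (P ∩ reflP z P) ξ x}
        = {x | IsTopOf (P ∩ reflP z P) (-ξ) x} := by
      intro ξ
      ext x
      simp only [Set.mem_setOf_eq, IsBotOf, IsTopOf]
      constructor
      · rintro ⟨hm, hle⟩
        refine ⟨hm, fun y hy => ?_⟩
        rw [dot_neg_left, dot_neg_left]
        exact neg_le_neg (hle y hy)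
      · rintro ⟨hm, hle⟩
        refine ⟨hm, fun y hy => ?_⟩
        have := hle y hy
        rw [dot_neg_left, dot_neg_left] at this
        linarith
    constructor
    · rw [hbotset v, hbotset w, htopset (-v), htopset (-w),
        amax_chamber V hVne (-v) (-w) Hneg]
    · rw [htopset v, htopset w, amax_chamber V hVne v w Hvw]

end
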